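/- Define formulas of 2-variable counting logic with counting rank at most t by: φ_0(x) = (x=x); φ_{t(l+1)}(x) = ∃^{≥t} y ((y<x) ∧ φ_{tl}(y)); and for 0 < p < t, φ_{tl+p}(x) = ∃^{≥p} y ((y<x) ∧ φ_{tl}(y)). Then in any linear order, an element a satisfies φ_j(x) if and only if there are at least j elements strictly below a; consequently, for n < m the sentence φ = ¬∃x φ_{n+1}(x) satisfies A_n ⊨ φ and A_m ⊨ ¬φ. -/

import Mathlib

/-- Terms over the linear-order signature `{min, max, <, succ}`. -/
inductive LTerm : Type
  | min : LTerm
  | max : LTerm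
  | var : ℕ → LTerm

/-- Formulas of counting logic over the signature `{min, max, <, succ}`:
first-order logic extended with the counting quantifiers `∃^{≥k} x_j` and `∀^{≥k} x_j`. -/
inductive CFormula : Type
  | eq : LTerm → LTerm → CFormula
  | lt : LTerm → LTerm → CFormula
  | succ : LTerm → LTerm → CFormula
  | not : CFormula → CFormula
  | or : CFormula → CFormula → CFormula
  | and : CFormula → CFormula → CFormula
  | exCnt : ℕ → ℕ → CFormula → CFormula    -- `exCnt k j ψ` is `∃^{≥k} x_j ψ`
  | allCnt : ℕ → ℕ → CFormula → CFormula   -- `allCnt k j ψ` is `∀^{≥k} x_j ψ = ¬∃^{≥k} x_j ¬ψ`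

/-- All variables occurring in a term have index `< m`. -/
def LTerm.varsLT (m : ℕ) : LTerm → Prop
  | .var j => j < m
  | _ => True

namespace CFormula

/-- Formula size. -/
def size : CFormula → ℕ
  | eq _ _ => 1
  | lt _ _ => 1
  | succ _ _ => 1
  | not ψ => ψ.size + 1
  | or ψ θ => ψ.size + θ.size
  | and ψ θ => ψ.size + θ.size
  | exCnt _ _ ψ => ψ.size + 1
  | allCnt _ _ ψ => ψ.size + 1

/-- Counting rank: the maximum counting rank of the quantifiers of the formula. -/
def crank : CFormula → ℕ
  | eq _ _ => 0
  | lt _ _ => 0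
  | succ _ _ => 0
  | not ψ => ψ.crank
  | or ψ θ => max ψ.crank θ.crank
  | and ψ θ => max ψ.crank θ.crank
  | exCnt k _ ψ => max k ψ.crank
  | allCnt k _ ψ => max k ψ.crank

/-- Quantifier rank: maximal nesting depth of quantifiers. -/
def qrank : CFormula → ℕ
  | eq _ _ => 0
  | lt _ _ => 0
  | succ _ _ => 0
  | not ψ => ψ.qrank
  | or ψ θ => max ψ.qrank θ.qrank
  | and ψ θ => max ψ.qrank θ.qrank
  | exCnt _ _ ψ => ψ.qrank + 1
  | allCnt _ _ ψ => ψ.qrank + 1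

/-- The formula uses only the variables `x_0, …, x_{m-1}`. -/
def varsLT (m : ℕ) : CFormula → Prop
  | eq t t' => t.varsLT m ∧ t'.varsLT m
  | lt t t' => t.varsLT m ∧ t'.varsLT m
  | succ t t' => t.varsLT m ∧ t'.varsLT m
  | not ψ => ψ.varsLT m
  | or ψ θ => ψ.varsLT m ∧ θ.varsLT m
  | and ψ θ => ψ.varsLT m ∧ θ.varsLT m
  | exCnt _ j ψ => j < m ∧ ψ.varsLT m
  | allCnt _ j ψ => j < m ∧ ψ.varsLT m

/-- Atomic formulas. -/
def IsAtomic : CFormula → Prop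
  | eq _ _ => True
  | lt _ _ => True
  | succ _ _ => True
  | _ => False

end CFormula

/-- A relational structure over the signature `{min, max, <, succ}`. -/
structure LOStruct : Type 1 where
  carrier : Type
  lt : carrier → carrier → Prop
  succ : carrier → carrier → Prop
  bot : carrier
  top : carrier

/-- Value of a term in a structure under a variable assignment. -/
def LTerm.val (S : LOStruct) (α : ℕ → S.carrier) : LTerm → S.carrier
  | .min => S.bot
  | .max => S.top
  | .var j => α j

/-- Satisfaction of a counting-logic formula in a structure under an assignment.
`∃^{≥k} x_j ψ` holds iff at least `k` distinct values for `x_j` satisfy `ψ`. -/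
def Sat (S : LOStruct) : (ℕ → S.carrier) → CFormula → Prop
  | α, .eq t t' => t.val S α = t'.val S α
  | α, .lt t t' => S.lt (t.val S α) (t'.val S α)
  | α, .succ t t' => S.succ (t.val S α) (t'.val S α)
  | α, .not ψ => ¬ Sat S α ψ
  | α, .or ψ θ => Sat S α ψ ∨ Sat S α θ
  | α, .and ψ θ => Sat S α ψ ∧ Sat S α θ
  | α, .exCnt k j ψ =>
      ∃ f : Fin k → S.carrier, Function.Injective f ∧
        ∀ i, Sat S (Function.update α j (f i)) ψ
  | α, .allCnt k j ψ =>
      ¬ ∃ f : Fin k → S.carrier, Function.Injective f ∧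
        ∀ i, ¬ Sat S (Function.update α j (f i)) ψ

/-- The linear order `A_n = ({0,…,n}, <)` with `min = 0`, `max = n` and the successor relation. -/
def AStruct (n : ℕ) : LOStruct where
  carrier := Fin (n + 1)
  lt := fun a b => a < b
  succ := fun a b => (a : ℕ) + 1 = (b : ℕ)
  bot := 0
  top := Fin.last n

/-- The family of formulas `φ_j` of 2-variable counting logic (variables `x_v` and `x_{1-v}`,
with `v ∈ {0,1}`; `x = x_0`, `y = x_1`):
`φ_0(x) = (x = x)`; `φ_{t(l+1)}(x) = ∃^{≥t} y ((y < x) ∧ φ_{tl}(y))`; and for `0 < p < t`,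
`φ_{tl+p}(x) = ∃^{≥p} y ((y < x) ∧ φ_{tl}(y))`.  (For `j ≥ 1`, writing `l = (j-1)/t`,
the counting rank used is `p = j - t*l ∈ {1,…,t}` and the recursive call is at `t*l`.) -/
def phiLB (t : ℕ) : ℕ → ℕ → CFormula
  | 0, v => CFormula.eq (LTerm.var v) (LTerm.var v)
  | j + 1, v =>
      CFormula.exCnt (j + 1 - t * (j / t)) (1 - v)
        (CFormula.and (CFormula.lt (LTerm.var (1 - v)) (LTerm.var v))
          (phiLB t (t * (j / t)) (1 - v)))
  decreasing_by
    have h : j / t * t ≤ j := Nat.div_mul_le_self j t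
    calc t * (j / t) = j / t * t := Nat.mul_comm _ _
      _ ≤ j := h
      _ < j + 1 := Nat.lt_succ_self j

lemma exists_inj_iff (N k b a : ℕ) (hk : 1 ≤ k) (haN : a ≤ N) :
    (∃ f : Fin k → Fin (N + 1), Function.Injective f ∧
      ∀ i, (f i : ℕ) < a ∧ b ≤ (f i : ℕ)) ↔ b + k ≤ a := by
  constructor
  · rintro ⟨f, hf, h2⟩
    have hcard : k ≤ (Finset.Ico b a).card := by
      have := Finset.card_le_card_of_injOn (s := Finset.univ) (fun i => (f i : ℕ))
        (fun i _ => Finset.mem_Ico.2 ⟨(h2 i).2, (h2 i).1⟩)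
        (fun i _ j _ h => hf (Fin.ext h))
      simpa using this
    rw [Nat.card_Ico] at hcard
    omega
  · intro h
    refine ⟨fun i => ⟨b + i, by omega⟩, ?_, ?_⟩
    · intro i j hij
      have : b + (i : ℕ) = b + (j : ℕ) := congrArg Fin.val hij
      exact Fin.ext (by omega)
    · intro i
      constructor
      · simp only []
        have := i.isLt
        omega
      · simp

lemma phiLB_main (t : ℕ) (ht : 1 ≤ t) :
    ∀ (j N v : ℕ), v < 2 → ∀ α : ℕ → Fin (N + 1),
      Sat (AStruct N) α (phiLB t j v) ↔ j ≤ (α v : ℕ) := by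
  intro j
  induction j using Nat.strong_induction_on with
  | _ j IH =>
    match j with
    | 0 =>
      intro N v hv α
      simp [phiLB, Sat]
    | j + 1 =>
      intro N v hv α
      have hvne : v ≠ 1 - v := by omega
      set b := t * (j / t) with hb
      have hbj : b ≤ j := by
        have h1 := Nat.div_mul_le_self j t
        have h2 : t * (j / t) = j / t * t := Nat.mul_comm _ _
        omega
      rw [phiLB]
      show (∃ f : Fin (j + 1 - b) → Fin (N + 1), Function.Injective f ∧
        ∀ i, Sat (AStruct N) (Function.update α (1 - v) (f i))
          (CFormula.and (CFormula.lt (LTerm.var (1 - v)) (LTerm.var v))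
            (phiLB t b (1 - v)))) ↔ j + 1 ≤ (α v : ℕ)
    -- simplify the inner Sat
      have hinner : ∀ c : Fin (N + 1),
          Sat (AStruct N) (Function.update α (1 - v) c)
            (CFormula.and (CFormula.lt (LTerm.var (1 - v)) (LTerm.var v))
              (phiLB t b (1 - v))) ↔ ((c : ℕ) < (α v : ℕ) ∧ b ≤ (c : ℕ)) := by
        intro c
        have h1 : Function.update α (1 - v) c (1 - v) = c := Function.update_self _ _ _
        have h2 : Function.update α (1 - v) c v = α v := Function.update_of_ne hvne _ _
        constructor
        · rintro ⟨hlt, hphi⟩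
          refine ⟨?_, ?_⟩
          · have : (AStruct N).lt (Function.update α (1 - v) c (1 - v))
              (Function.update α (1 - v) c v) := hlt
            rw [h1, h2] at this
            exact this
          · have := (IH b (by omega) N (1 - v) (by omega)
              (Function.update α (1 - v) c)).mp hphi
            rwa [h1] at this
        · rintro ⟨hlt, hge⟩
          refine ⟨?_, ?_⟩
          · show (AStruct N).lt (Function.update α (1 - v) c (1 - v))
              (Function.update α (1 - v) c v)
            rw [h1, h2]
            exact hlt
          · refine (IH b (by omega) N (1 - v) (by omega) _).mpr ?_
            exact le_of_le_of_eq hge (congrArg Fin.val h1).symm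
      have key := exists_inj_iff N (j + 1 - b) b (α v) (by omega) (by omega)
      constructor
      · rintro ⟨f, hf, hsat⟩
        have : b + (j + 1 - b) ≤ (α v : ℕ) :=
          key.mp ⟨f, hf, fun i => (hinner (f i)).mp (hsat i)⟩
        omega
      · intro h
        obtain ⟨f, hf, hprop⟩ := key.mpr (by omega)
        exact ⟨f, hf, fun i => (hinner (f i)).mpr (hprop i)⟩

/-- In any linear order `A_N`, an element `a` satisfies `φ_j(x_v)` if and only
if there are at least `j` elements strictly below `a` (in `A_N` the number of elements strictly
below `a` is the value of `a`); consequently, for `n < m` the sentence `φ = ¬∃x φ_{n+1}(x)`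
satisfies `A_n ⊨ φ` and `A_m ⊨ ¬φ`. -/
theorem phiLB_spec (t : ℕ) (ht : 1 ≤ t) :
    (∀ (N j v : ℕ), v < 2 → ∀ α : ℕ → Fin (N + 1),
        Sat (AStruct N) α (phiLB t j v) ↔ j ≤ (α v : ℕ)) ∧
    (∀ n m : ℕ, n < m →
        Sat (AStruct n) (fun _ => (AStruct n).bot)
          (CFormula.not (CFormula.exCnt 1 0 (phiLB t (n + 1) 0))) ∧
        ¬ Sat (AStruct m) (fun _ => (AStruct m).bot)
          (CFormula.not (CFormula.exCnt 1 0 (phiLB t (n + 1) 0)))) := by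
  refine ⟨fun N j v => phiLB_main t ht j N v, ?_⟩
  intro n m hnm
  constructor
  · show ¬ ∃ f : Fin 1 → Fin (n + 1), Function.Injective f ∧
      ∀ i, Sat (AStruct n) (Function.update (fun _ => (AStruct n).bot) 0 (f i))
        (phiLB t (n + 1) 0)
    rintro ⟨f, -, hsat⟩
    have := (phiLB_main t ht (n + 1) n 0 (by omega) _).mp (hsat 0)
    replace this : n + 1 ≤ (f 0 : ℕ) := le_of_le_of_eq this (congrArg Fin.val (Function.update_self _ _ _))
    have := (f 0).isLt
    omega
  · show ¬ ¬ ∃ f : Fin 1 → Fin (m + 1), Function.Injective f ∧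
      ∀ i, Sat (AStruct m) (Function.update (fun _ => (AStruct m).bot) 0 (f i))
        (phiLB t (n + 1) 0)
    push_neg
    have hc : n + 1 < m + 1 := by omega
    refine ⟨fun _ => ⟨n + 1, hc⟩, fun i j _ => Subsingleton.elim i j, fun i => ?_⟩
    refine (phiLB_main t ht (n + 1) m 0 (by omega) _).mpr ?_
    exact le_of_eq (congrArg Fin.val (Function.update_self (0 : ℕ) (⟨n + 1, hc⟩ : Fin (m + 1)) (fun _ => (AStruct m).bot))).symm
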